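/- Let k be a field of characteristic ≠ 2, n ≥ 1, g ∈ k[x] monic of degree n with f(x) = x·g(x²) separable, L = k[x]/(f) with β the image of x, τ the k-algebra automorphism of L with τ(β) = −β, and ⟨λ,μ⟩ = (−1)ⁿ·c(λ·τ(μ)) the bilinear form given by the coefficient of β^{2n}. Then a k-linear automorphism h : L → L satisfies both ⟨hλ,hμ⟩ = ⟨λ,μ⟩ for all λ,μ ∈ L and h(βλ) = β·h(λ) for all λ ∈ L if and only if h is multiplication by some λ₀ ∈ L with λ₀·τ(λ₀) = 1; and for such h the determinant of h equals the norm N_{L/k}(λ₀). -/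

import Mathlib

open Polynomial

/-- Let `k` be a field of characteristic `≠ 2`, `n ≥ 1`, `g ∈ k[x]` monic of degree `n`
with `f(x) = x·g(x²)` separable, `L = k[x]/(f)` with `β` the image of `x`, `τ` the
`k`-algebra automorphism of `L` with `τ(β) = -β`, and `⟨λ,μ⟩ = (-1)ⁿ·c(λ·τ(μ))` the
bilinear form given by the coefficient of `β^{2n}`.  Then a `k`-linear automorphism `h` of
`L` preserves `⟨·,·⟩` and commutes with multiplication by `β` if and only if `h` is
multiplication by some `λ₀ ∈ L` with `λ₀·τ(λ₀) = 1`; and for such `h` the determinant of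
`h` equals the norm `N_{L/k}(λ₀)`, i.e. the determinant of multiplication by `λ₀`. -/
theorem stabilizer_of_skew_self_adjoint_operator {k : Type*} [Field k] (hchar : (2 : k) ≠ 0)
    (n : ℕ) (hn : 1 ≤ n)
    (g : k[X]) (hg : g.Monic) (hgdeg : g.natDegree = n)
    (f : k[X]) (hf : f = X * g.comp (X ^ 2)) (hsep : f.Separable)
    (c : AdjoinRoot f →ₗ[k] k)
    (hc : ∀ i : ℕ, i ≤ 2 * n → c (AdjoinRoot.root f ^ i) = if i = 2 * n then 1 else 0)
    (τ : AdjoinRoot f ≃ₐ[k] AdjoinRoot f) (hτ : τ (AdjoinRoot.root f) = -AdjoinRoot.root f)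
    (B : AdjoinRoot f → AdjoinRoot f → k)
    (hB : ∀ lam mu : AdjoinRoot f, B lam mu = (-1 : k) ^ n * c (lam * τ mu))
    (h : AdjoinRoot f ≃ₗ[k] AdjoinRoot f) :
    (((∀ lam mu : AdjoinRoot f, B (h lam) (h mu) = B lam mu) ∧
        (∀ lam : AdjoinRoot f, h (AdjoinRoot.root f * lam) = AdjoinRoot.root f * h lam)) ↔
      ∃ lam₀ : AdjoinRoot f, lam₀ * τ lam₀ = 1 ∧
        ∀ lam : AdjoinRoot f, h lam = lam₀ * lam) ∧
    (∀ lam₀ : AdjoinRoot f, lam₀ * τ lam₀ = 1 →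
      (∀ lam : AdjoinRoot f, h lam = lam₀ * lam) →
      LinearMap.det h.toLinearMap = LinearMap.det (LinearMap.mulLeft k lam₀)) := by
  set β := AdjoinRoot.root f with hβ
  -- degree facts
  have hcompm : (g.comp (X ^ 2)).Monic := hg.comp (monic_X_pow 2) (by simp)
  have hcomp_deg : (g.comp (X ^ 2)).natDegree = 2 * n := by
    rw [natDegree_comp, hgdeg, natDegree_pow, natDegree_X]; ring
  have hfmonic : f.Monic := by rw [hf]; exact monic_X.mul hcompm
  have hfne : f ≠ 0 := hfmonic.ne_zero
  have hfdeg : f.natDegree = 2 * n + 1 := by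
    rw [hf, natDegree_mul X_ne_zero hcompm.ne_zero, natDegree_X, hcomp_deg]; omega
  -- nondegeneracy of ν ↦ c (u * ν)
  have hnondeg : ∀ u : AdjoinRoot f, (∀ ν, c (u * ν) = 0) → u = 0 := by
    intro u hu
    by_contra hune
    obtain ⟨p, rfl⟩ := AdjoinRoot.mk_surjective u
    set q : k[X] := p %ₘ f with hqdef
    have hq : AdjoinRoot.mk f q = AdjoinRoot.mk f p := by
      rw [AdjoinRoot.mk_eq_mk, hqdef, modByMonic_eq_sub_mul_div p f]
      exact ⟨-(p /ₘ f), by ring⟩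
    have hqne : q ≠ 0 := by
      intro h0
      exact hune (by rw [← hq, h0, map_zero])
    have hdeg : q.natDegree < 2 * n + 1 := by
      rw [← hfdeg]
      exact natDegree_lt_natDegree hqne (degree_modByMonic_lt p hfmonic)
    set j : ℕ := q.natDegree with hjdef
    have hj : j ≤ 2 * n := by omega
    have hrepr : AdjoinRoot.mk f q = ∑ i ∈ Finset.range (j + 1), q.coeff i • β ^ i := by
      conv_lhs => rw [q.as_sum_range' (j + 1) (lt_add_one _)]
      rw [map_sum]
      refine Finset.sum_congr rfl fun i _ => ?_
      rw [← C_mul_X_pow_eq_monomial, map_mul, map_pow, AdjoinRoot.mk_X, AdjoinRoot.mk_C]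
      simp [Algebra.smul_def, AdjoinRoot.algebraMap_eq, hβ]
    have hval : c (AdjoinRoot.mk f q * β ^ (2 * n - j)) = q.coeff j := by
      rw [hrepr, Finset.sum_mul, map_sum]
      rw [Finset.sum_eq_single j]
      · rw [smul_mul_assoc, ← pow_add, map_smul, smul_eq_mul,
          hc (j + (2 * n - j)) (by omega)]
        rw [if_pos (by omega), mul_one]
      · intro i hi hij
        have hi' : i < j + 1 := Finset.mem_range.mp hi
        rw [smul_mul_assoc, ← pow_add, map_smul, smul_eq_mul,
          hc (i + (2 * n - j)) (by omega), if_neg (by omega), mul_zero]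
      · intro hj'
        exact absurd (Finset.self_mem_range_succ j) hj'
    rw [hq, hu (β ^ (2 * n - j))] at hval
    exact (mt leadingCoeff_eq_zero.mp hqne) hval.symm
  -- multiplication commutation from commuting with β
  constructor
  · constructor
    · rintro ⟨hBpres, hcomm⟩
      have key : ∀ μ lam : AdjoinRoot f, h (μ * lam) = μ * h lam := by
        intro μ
        have hμ : μ ∈ Algebra.adjoin k ({β} : Set (AdjoinRoot f)) := by
          rw [AdjoinRoot.adjoinRoot_eq_top]; trivial
        induction hμ using Algebra.adjoin_induction with
        | mem x hx =>
          intro lam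
          rw [Set.mem_singleton_iff.mp hx]
          exact hcomm lam
        | algebraMap r =>
          intro lam
          rw [← Algebra.smul_def, map_smul, Algebra.smul_def]
        | add x y hx hy ihx ihy =>
          intro lam
          rw [add_mul, map_add, ihx, ihy, add_mul]
        | mul x y hx hy ihx ihy =>
          intro lam
          rw [mul_assoc, ihx, ihy, mul_assoc]
      refine ⟨h 1, ?_, fun lam => by rw [← mul_one lam, key, mul_one, mul_comm]⟩
      -- show h 1 * τ (h 1) = 1
      have hne : ((-1 : k) ^ n) ≠ 0 := pow_ne_zero _ (by norm_num)
      have hcθ : ∀ ν : AdjoinRoot f, c ((h 1 * τ (h 1)) * ν) = c ν := by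
        intro ν
        have := hBpres ν 1
        rw [hB, hB] at this
        have h1 : h ν = h 1 * ν := by rw [← mul_one ν, key, mul_one, mul_comm]
        rw [h1] at this
        have h2 := mul_left_cancel₀ hne this
        rw [show (τ (1 : AdjoinRoot f)) = 1 from map_one τ, mul_one] at h2
        rw [show (h 1 * τ (h 1)) * ν = h 1 * ν * τ (h 1) by ring, h2]
      have : h 1 * τ (h 1) - 1 = 0 := by
        apply hnondeg
        intro ν
        rw [sub_mul, one_mul, map_sub, hcθ, sub_self]
      exact sub_eq_zero.mp this
    · rintro ⟨lam₀, hlam₀, hmul⟩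
      constructor
      · intro lam mu
        rw [hB, hB, hmul, hmul]
        congr 1
        rw [show τ (lam₀ * mu) = τ lam₀ * τ mu from map_mul τ _ _,
          show lam₀ * lam * (τ lam₀ * τ mu) = (lam₀ * τ lam₀) * (lam * τ mu) by ring,
          hlam₀, one_mul]
      · intro lam
        rw [hmul, hmul]; ring
  · intro lam₀ _ hmul
    have : h.toLinearMap = LinearMap.mulLeft k lam₀ := by
      ext lam
      simp [hmul lam]
    rw [this]
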